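/- Let Δ = (Σ_1, …, Σ_n) be a distribution of Σ and let Δ' = (Σ'_1, …, Σ'_k) ∈ M(Δ). If there exists i ∈ [1, k] such that Σ'_i is not a component of Δ and Cr_Δ(Σ'_i, σ') = [1, n] for every σ' ∈ Σ − Σ'_i (where Cr_Δ is computed with N determined by Δ and with simple paths in the graph (Σ, D_Δ)), then L_cand is decomposable with respect to Δ'. -/

import Mathlib

/-- A *distribution* of the (finite) alphabet `α`: a family of non-empty,
pairwise incomparable (under set inclusion) sub-alphabets whose union is `α`.
Its size is `comps.ncard`. -/
structure Distr (α : Type) [Fintype α] where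
  comps : Set (Set α)
  comps_nonempty : ∀ S ∈ comps, S.Nonempty
  comps_cover : ∀ a : α, ∃ S ∈ comps, a ∈ S
  comps_incomp : ∀ S ∈ comps, ∀ T ∈ comps, S ≠ T → ¬ S ⊆ T

section Defs

variable {α : Type} [Fintype α]

/-- Natural projection `P_{Σ'}`: erase from a string all symbols not in `S`. -/
noncomputable def projA (S : Set α) (s : List α) : List α :=
  s.filter fun a => @decide (a ∈ S) (Classical.propDecidable _)

/-- `L` is decomposable with respect to `Δ`:
`L = ∥_i P_{Σ_i}(L) = ⋂_i P_{Σ_i}⁻¹(P_{Σ_i}(L))`. -/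
def Decomposable (L : Set (List α)) (Δ : Distr α) : Prop :=
  L = ⋂ S ∈ Δ.comps, projA S ⁻¹' (projA S '' L)

/-- The partial order `≤_Σ` on distributions: every component of `Δ` is
contained in some component of `Δ'`. -/
def DistLE (Δ Δ' : Distr α) : Prop :=
  ∀ S ∈ Δ.comps, ∃ T ∈ Δ'.comps, S ⊆ T

/-- `P` is a *reduction* of `Δ`. -/
def IsReduction (P : Set (Distr α)) (Δ : Distr α) : Prop :=
  2 ≤ P.ncard ∧
  (∀ Δ' ∈ P, Δ'.comps.ncard < Δ.comps.ncard) ∧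
  (∀ L : Set (List α), Decomposable L Δ ↔ ∀ Δ' ∈ P, Decomposable L Δ')

/-- The maximal members (under set inclusion) of a family of sets. -/
def MaximalMem {β : Type} (F : Set (Set β)) : Set (Set β) :=
  {S | S ∈ F ∧ ∀ T ∈ F, S ⊆ T → S = T}

/-- The dependence relation `D_Δ`. -/
def DepRel (Δ : Distr α) : Set (α × α) :=
  {p | ∃ S ∈ Δ.comps, p.1 ∈ S ∧ p.2 ∈ S}

/-- The independence relation `I_Δ = Σ × Σ − D_Δ`. -/
def IndepRel (Δ : Distr α) : Set (α × α) :=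
  {p | ¬ ∃ S ∈ Δ.comps, p.1 ∈ S ∧ p.2 ∈ S}

/-- `Σ' ⊑ Δ`: `Σ'` is contained in some component of `Δ`. -/
def SqSub (S : Set α) (Δ : Distr α) : Prop :=
  ∃ T ∈ Δ.comps, S ⊆ T

/-- `Δ` is the greatest lower bound of the family `D` with respect to `≤_Σ`. -/
def IsGLBFam {l : ℕ} (D : Fin l → Distr α) (Δ : Distr α) : Prop :=
  (∀ i, DistLE Δ (D i)) ∧
  ∀ Δ''' : Distr α, (∀ i, DistLE Δ''' (D i)) → DistLE Δ''' Δ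

/-- `Δ'` is *merged* from `Δ`: `Δ' ≠ (Σ)` and `Δ'` is obtained from a
partition of the components of `Δ` having at least one block of size ≥ 2 by
taking the unions over the blocks and keeping only the maximal resulting
sub-alphabets. -/
def MergedFrom (Δ' Δ : Distr α) : Prop :=
  Δ'.comps ≠ {Set.univ} ∧
  ∃ part : Set (Set (Set α)),
    (∀ B ∈ part, B.Nonempty) ∧
    (∀ B ∈ part, B ⊆ Δ.comps) ∧
    (∀ B ∈ part, ∀ C ∈ part, B ≠ C → Disjoint B C) ∧
    (∀ S ∈ Δ.comps, ∃ B ∈ part, S ∈ B) ∧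
    (∃ B ∈ part, ∃ S ∈ B, ∃ T ∈ B, S ≠ T) ∧
    Δ'.comps = MaximalMem {U : Set α | ∃ B ∈ part, U = ⋃₀ B}

/-- Membership in the search space `S_Δ`: a set of distributions merged from
`Δ` that are pairwise `≤_Σ`-incomparable. -/
def MemS (Δ : Distr α) (P : Set (Distr α)) : Prop :=
  (∀ Δ' ∈ P, MergedFrom Δ' Δ) ∧
  ∀ Δ₁ ∈ P, ∀ Δ₂ ∈ P, Δ₁ ≠ Δ₂ → ¬ DistLE Δ₁ Δ₂

/-- The ordering `≤_Δ` on sets of distributions: every member of `Q` has a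
member of `P` below it with respect to `≤_Σ`. -/
def SetLE (P Q : Set (Distr α)) : Prop :=
  ∀ Δ' ∈ Q, ∃ Δ'' ∈ P, DistLE Δ'' Δ'

/-- `[F]`: the `≤_Σ`-minimal members of a set of distributions. -/
def MinimalD (F : Set (Distr α)) : Set (Distr α) :=
  {Δ' | Δ' ∈ F ∧ ∀ Δ'' ∈ F, DistLE Δ'' Δ' → DistLE Δ' Δ''}

/-- `Δ'` is obtained from `Δ` by merging exactly two components `S ≠ T`
(and keeping only the maximal sub-alphabets); the members of `⊥(Δ)`. -/
def MinMergedFrom (Δ' Δ : Distr α) : Prop :=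
  ∃ S ∈ Δ.comps, ∃ T ∈ Δ.comps, S ≠ T ∧
    Δ'.comps = MaximalMem ((Δ.comps \ {S, T}) ∪ {S ∪ T})

/-- The set `A(Δ)` of shared symbols of a distribution. -/
def SharedSyms (Δ : Distr α) : Set α :=
  {a | ∃ S ∈ Δ.comps, ∃ T ∈ Δ.comps, S ≠ T ∧ a ∈ S ∧ a ∈ T}

/-- The substitution of `Δ'` into the component `C` of `Δ''` yields `Δs`:
`Δs` is obtained from the components of `Δ''` other than `C` together with the
intersections `C ∩ S` for components `S` of `Δ'`, keeping only the maximal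
non-empty members. -/
def SubstResult (Δ' Δ'' : Distr α) (C : Set α) (Δs : Distr α) : Prop :=
  Δs.comps =
    MaximalMem {T : Set α |
      T.Nonempty ∧ (T ∈ Δ''.comps \ {C} ∨ ∃ S ∈ Δ'.comps, T = C ∩ S)}

/-- One swap of two adjacent symbols forming a pair in `I`. -/
def SwapStep (I : Set (α × α)) (s t : List α) : Prop :=
  ∃ (u v : List α) (a b : α),
    (a, b) ∈ I ∧ s = u ++ a :: b :: v ∧ t = u ++ b :: a :: v

/-- Trace equivalence with respect to `I`: a finite sequence of swaps of
adjacent independent symbols. -/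
def TraceEquiv (I : Set (α × α)) : List α → List α → Prop :=
  Relation.ReflTransGen (SwapStep I)

/-- `L` is trace-closed with respect to `I`. -/
def TraceClosed (I : Set (α × α)) (L : Set (List α)) : Prop :=
  L = {t | ∃ s ∈ L, TraceEquiv I s t}

/-- The map `N` determined by the enumeration `c` of the components of a
distribution: `N(a) = {i : a ∉ Σ_i}`. -/
def Nmap {n : ℕ} (c : Fin n → Set α) (a : α) : Set (Fin n) :=
  {i | a ∉ c i}

/-- A simple path from `x` to `y` in the graph `(Σ, D)`: a list of pairwise
distinct symbols, starting at `x`, ending at `y`, with consecutive symbols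
related by `D`. -/
def IsSimplePath (D : Set (α × α)) (p : List α) (x y : α) : Prop :=
  p.Nodup ∧ p.head? = some x ∧ p.getLast? = some y ∧
    p.Chain' (fun a b => (a, b) ∈ D)

/-- `Cr_D(S, y)` (with `N` given by the enumeration `c`): the set of indices
`i` such that some simple path `p` from some `x ∈ S` to `y` in `(Σ, D)`
satisfies `i ∈ ⋂_{a ∈ p.dropLast} N(a)`. -/
def CrSet {n : ℕ} (c : Fin n → Set α) (D : Set (α × α)) (S : Set α) (y : α) :
    Set (Fin n) :=
  {i | ∃ x ∈ S, ∃ p : List α,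
    IsSimplePath D p x y ∧ ∀ a ∈ p.dropLast, i ∈ Nmap c a}

/-- The smallest set of distributions containing `Q` and closed under
substitution. -/
inductive SubstClosure (Q : Set (Distr α)) : Distr α → Prop
  | base (Δ' : Distr α) (h : Δ' ∈ Q) : SubstClosure Q Δ'
  | step (Δ' Δ'' Δs : Distr α) (C : Set α)
      (h1 : SubstClosure Q Δ') (h2 : SubstClosure Q Δ'')
      (hC : C ∈ Δ''.comps) (hA : SharedSyms Δ' ⊆ C)
      (hs : SubstResult Δ' Δ'' C Δs) : SubstClosure Q Δs

end Defs

section Count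

variable {α : Type} [Fintype α] [DecidableEq α]

/-- `L(Σ_j)` (with `j` 0-indexed, so the paper's exponent `j+1` is `j+2`
here): all strings containing exactly one occurrence of each `σ_i ∈ Σ_j` and
exactly `j+2` occurrences of each `σ_i ∉ Σ_j`. -/
def Lword {m : ℕ} (σ : Fin m → α) (Sj : Set α) (j : ℕ) : Set (List α) :=
  {s | ∀ i : Fin m,
    (σ i ∈ Sj → s.count (σ i) = 1) ∧ (σ i ∉ Sj → s.count (σ i) = j + 2)}

/-- The candidate counter example `L_cand = ⋃_j L(Σ_j)`, relative to an
enumeration `c` of the components and an enumeration `σ` of the alphabet. -/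
def Lcand {n m : ℕ} (c : Fin n → Set α) (σ : Fin m → α) : Set (List α) :=
  ⋃ j : Fin n, Lword σ (c j) (j : ℕ)

end Count


private lemma chain_propagate' {β : Type*} {D : β → β → Prop} {Q C : β → Prop}
    (step : ∀ a b, D a b → C a → Q a → Q b) :
    ∀ (p : List β) (x y : β), p.Chain' D → p.head? = some x →
      p.getLast? = some y → (∀ a ∈ p.dropLast, C a) → Q x → Q y := by
  intro p
  induction p with
  | nil => intro x y _ hh _ _ _; simp at hh
  | cons a t ih =>
    intro x y hch hh hl hdl hQ
    obtain rfl : a = x := by simpa using hh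
    cases t with
    | nil =>
      obtain rfl : a = y := by simpa using hl
      exact hQ
    | cons b t' =>
      rw [List.Chain', List.isChain_cons_cons] at hch
      have hCa : C a := hdl a (by rw [List.dropLast_cons₂]; exact List.mem_cons_self)
      have hQb := step a b hch.1 hCa hQ
      rw [List.getLast?_cons_cons] at hl
      refine ih b y hch.2 rfl hl ?_ hQb
      intro u hu
      exact hdl u (by rw [List.dropLast_cons₂]; exact List.mem_cons_of_mem _ hu)

private lemma exists_maximal_mem' {α : Type} [Fintype α] (F : Set (Set α)) {U : Set α}
    (hU : U ∈ F) : ∃ M ∈ MaximalMem F, U ⊆ M := by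
  have hfin : {V | V ∈ F ∧ U ⊆ V}.Finite := Set.toFinite _
  obtain ⟨M, hM, hmax⟩ := Set.Finite.exists_maximalFor id _ hfin ⟨U, hU, subset_rfl⟩
  exact ⟨M, ⟨hM.1, fun T hT hMT => Set.Subset.antisymm hMT (hmax ⟨hT, hM.2.trans hMT⟩ hMT)⟩, hM.2⟩

/-- If `Δ' ∈ M(Δ)` has a component `S` that is not a
component of `Δ` with `Cr_Δ(S, σ') = [1, n]` for every `σ' ∈ Σ − S`
(with `N` determined by `Δ` and simple paths in `(Σ, D_Δ)`), then
`L_cand` is decomposable with respect to `Δ'`. -/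
theorem statement_7 {α : Type} [Fintype α] [DecidableEq α] (Δ Δ' : Distr α)
    (hM : MergedFrom Δ' Δ)
    (n m : ℕ) (c : Fin n → Set α)
    (hc1 : Function.Injective c) (hc2 : Set.range c = Δ.comps)
    (σ : Fin m → α) (hσ : Function.Bijective σ)
    (h : ∃ S ∈ Δ'.comps, S ∉ Δ.comps ∧
      ∀ y : α, y ∉ S → CrSet c (DepRel Δ) S y = Set.univ) :
    Decomposable (Lcand c σ) Δ' := by
  classical
  obtain ⟨S, hS, hSnot, hCr⟩ := h
  obtain ⟨hne, part, hpart_ne, hpart_sub, hdisj, hcover, hbig, hcomps⟩ := hM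
  unfold Decomposable
  apply Set.Subset.antisymm
  · intro s hs
    apply Set.mem_iInter₂.mpr
    intro T hT
    exact Set.mem_preimage.mpr ⟨s, hs, rfl⟩
  · intro s hs
    -- Step A: each component of Δ' carries a count pattern of some index j
    have stepA : ∀ T ∈ Δ'.comps, ∃ j : Fin n, ∀ a ∈ T,
        (a ∈ c j → s.count a = 1) ∧ (a ∉ c j → s.count a = (j : ℕ) + 2) := by
      intro T hT
      obtain ⟨w, hw, hproj⟩ := Set.mem_preimage.mp (Set.mem_iInter₂.mp hs T hT)
      obtain ⟨j, hj⟩ := Set.mem_iUnion.mp hw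
      simp only [Lword, Set.mem_setOf_eq] at hj
      refine ⟨j, fun a ha => ?_⟩
      obtain ⟨i, rfl⟩ := hσ.2 a
      have hpa : (fun a => @decide (a ∈ T) (Classical.propDecidable _)) (σ i) = true :=
        decide_eq_true ha
      have h1 : (projA T s).count (σ i) = s.count (σ i) := List.count_filter hpa
      have h2 : (projA T w).count (σ i) = w.count (σ i) := List.count_filter hpa
      have hcnt : s.count (σ i) = w.count (σ i) := by rw [← h1, ← h2, hproj]
      exact ⟨fun hm => by rw [hcnt]; exact (hj i).1 hm,
             fun hm => by rw [hcnt]; exact (hj i).2 hm⟩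
    -- every component of Δ is contained in some component of Δ'
    have hcov : ∀ U ∈ Δ.comps, ∃ T ∈ Δ'.comps, U ⊆ T := by
      intro U hU
      obtain ⟨B, hB, hUB⟩ := hcover U hU
      have hF : ⋃₀ B ∈ {V : Set α | ∃ B ∈ part, V = ⋃₀ B} := ⟨B, hB, rfl⟩
      obtain ⟨M, hM, hsub⟩ := exists_maximal_mem' _ hF
      exact ⟨M, hcomps ▸ hM, (Set.subset_sUnion_of_mem hUB).trans hsub⟩
    obtain ⟨jS, hjS⟩ := stepA S hS
    -- propagation step along the dependence relation
    have step : ∀ a b : α, (a, b) ∈ DepRel Δ → a ∉ c jS →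
        ((a ∈ c jS → s.count a = 1) ∧ (a ∉ c jS → s.count a = (jS : ℕ) + 2)) →
        ((b ∈ c jS → s.count b = 1) ∧ (b ∉ c jS → s.count b = (jS : ℕ) + 2)) := by
      intro a b hab hna hPa
      obtain ⟨Sc, hSc, haSc, hbSc⟩ := hab
      obtain ⟨T, hT, hsubT⟩ := hcov Sc hSc
      obtain ⟨jT, hjT⟩ := stepA T hT
      have hfa : s.count a = (jS : ℕ) + 2 := hPa.2 hna
      have hjTeq : jT = jS := by
        by_cases hmem : a ∈ c jT
        · have h1 := (hjT a (hsubT haSc)).1 hmem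
          rw [hfa] at h1; omega
        · have h1 := (hjT a (hsubT haSc)).2 hmem
          rw [hfa] at h1
          exact Fin.ext (by omega)
      exact hjTeq ▸ hjT b (hsubT hbSc)
    -- the pattern of jS holds everywhere
    have key : ∀ a : α,
        (a ∈ c jS → s.count a = 1) ∧ (a ∉ c jS → s.count a = (jS : ℕ) + 2) := by
      intro a
      by_cases haS : a ∈ S
      · exact hjS a haS
      · have hjmem : jS ∈ CrSet c (DepRel Δ) S a := (hCr a haS) ▸ Set.mem_univ jS
        obtain ⟨x, hx, p, ⟨hnd, hh, hl, hch⟩, hdl⟩ := hjmem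
        exact chain_propagate' step p x a hch hh hl (fun u hu => hdl u hu) (hjS x hx)
    exact Set.mem_iUnion.mpr ⟨jS, fun i => key (σ i)⟩
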